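/- In any execution of the greedy bottom-up triplet-forming procedure on a tree T rooted at a degree-1 node, the triplets graph (triplets as vertices, edges between triplets sharing a node of T) is connected. -/

import Mathlib

open scoped Classical

namespace ArtGallery

noncomputable section

/-- Node colors used by the greedy bottom-up triplet-forming procedure. -/
inductive TColor
  | red | orange | green
deriving DecidableEq

/-- A finite rooted tree of maximum degree 3 whose root has degree 1, together with its
parent and depth (level) functions. -/
structure RootedTree (V : Type) [Fintype V] where
  G : SimpleGraph V
  isTree : G.IsTree
  root : V
  parent : V → V
  parent_root : parent root = root
  parent_adj : ∀ v, v ≠ root → G.Adj v (parent v)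
  depth : V → ℕ
  depth_root : depth root = 0
  depth_parent : ∀ v, v ≠ root → depth (parent v) + 1 = depth v
  maxDeg : ∀ v, (G.neighborSet v).ncard ≤ 3
  root_deg : (G.neighborSet root).ncard = 1

/-- A state of the procedure: a coloring of the nodes and the set of triplets formed so far. -/
structure TState (V : Type) where
  color : V → TColor
  trips : Set (Set V)

variable {V : Type} [Fintype V]

/-- The initial state: all leaves orange, all other nodes red, no triplets formed. -/
def initState (T : RootedTree V) : TState V :=
  ⟨fun v => if v ≠ T.root ∧ (T.G.neighborSet v).ncard = 1 then TColor.orange else TColor.red, ∅⟩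

/-- One step of the greedy bottom-up triplet-forming procedure.  Orange nodes are processed
from the deepest level upwards (down to level 2): either two orange siblings are merged with
their parent (which becomes orange, the siblings green), or a lone orange node is merged with
its parent and grandparent (the grandparent becomes orange, the other two green). -/
inductive TStep (T : RootedTree V) : TState V → TState V → Prop
  | pair (s : TState V) (v v' : V)
      (hv : s.color v = TColor.orange) (hv' : s.color v' = TColor.orange)
      (hne : v ≠ v') (hp : T.parent v = T.parent v')
      (hdeep : ∀ w, s.color w = TColor.orange → T.depth w ≤ T.depth v)
      (hd : 2 ≤ T.depth v) :
      TStep T s ⟨fun w => if w = v ∨ w = v' then TColor.green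
                  else if w = T.parent v then TColor.orange else s.color w,
        insert {v, v', T.parent v} s.trips⟩
  | chain (s : TState V) (v : V)
      (hv : s.color v = TColor.orange)
      (hsolo : ∀ v', v' ≠ v → T.parent v' = T.parent v → s.color v' ≠ TColor.orange)
      (hdeep : ∀ w, s.color w = TColor.orange → T.depth w ≤ T.depth v)
      (hd : 2 ≤ T.depth v) :
      TStep T s ⟨fun w => if w = v ∨ w = T.parent v then TColor.green
                  else if w = T.parent (T.parent v) then TColor.orange else s.color w,
        insert {v, T.parent v, T.parent (T.parent v)} s.trips⟩

/-- The procedure has finished its main loop: no orange node at level `≥ 2` remains. -/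
def Terminal (T : RootedTree V) (s : TState V) : Prop :=
  ∀ v, s.color v = TColor.orange → T.depth v < 2

/-- The final family of triplets: if the root is already covered, the triplets formed so far;
otherwise one additional triplet consisting of the root, its child and a grandchild. -/
def FinalTrips (T : RootedTree V) (s : TState V) (F : Set (Set V)) : Prop :=
  ((∃ t ∈ s.trips, T.root ∈ t) ∧ F = s.trips) ∨
  ((∀ t ∈ s.trips, T.root ∉ t) ∧
    ∃ c g : V, c ≠ T.root ∧ T.parent c = T.root ∧ g ≠ c ∧ T.parent g = c ∧
      F = insert {T.root, c, g} s.trips)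

lemma depth_eq_zero (T : RootedTree V) {u : V} (h : T.depth u = 0) : u = T.root := by
  by_contra hu
  have := T.depth_parent u hu
  omega

lemma ne_root_of_depth (T : RootedTree V) {u : V} (h : 1 ≤ T.depth u) : u ≠ T.root := by
  intro he; rw [he, T.depth_root] at h; omega

lemma parent_ne_self (T : RootedTree V) {u : V} (hu : u ≠ T.root) : T.parent u ≠ u := by
  intro h
  have := T.depth_parent u hu
  rw [h] at this
  omega

lemma child_unique (T : RootedTree V) {u u' : V} (hu : u ≠ T.root) (hpu : T.parent u = T.root)
    (hu' : u' ≠ T.root) (hpu' : T.parent u' = T.root) : u = u' := by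
  have h1 : u ∈ T.G.neighborSet T.root := by
    have h := T.parent_adj u hu; rw [hpu] at h; exact h.symm
  have h2 : u' ∈ T.G.neighborSet T.root := by
    have h := T.parent_adj u' hu'; rw [hpu'] at h; exact h.symm
  obtain ⟨a, ha⟩ := Set.ncard_eq_one.mp T.root_deg
  rw [ha, Set.mem_singleton_iff] at h1 h2
  rw [h1, h2]

/-- Two triplets are linked in a family `F` if both belong to `F` and share a node. -/
def Link (F : Set (Set V)) (a b : Set V) : Prop := a ∈ F ∧ b ∈ F ∧ (a ∩ b).Nonempty

/-- The invariant maintained by the procedure. -/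
structure Inv (T : RootedTree V) (s : TState V) : Prop where
  reach : ∀ t ∈ s.trips, ∃ t₀ ∈ s.trips, (∃ w ∈ t₀, s.color w = TColor.orange) ∧
      Relation.ReflTransGen (Link s.trips) t t₀
  rootOrange : s.color T.root = TColor.orange → ∃ t ∈ s.trips, T.root ∈ t
  rootTrip : ∀ t ∈ s.trips, T.root ∈ t → ∃ u ∈ t, u ≠ T.root ∧ T.parent u = T.root

lemma rtg_link_mono {F F' : Set (Set V)} (h : F ⊆ F') {a b : Set V}
    (hab : Relation.ReflTransGen (Link F) a b) : Relation.ReflTransGen (Link F') a b :=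
  Relation.ReflTransGen.lift (p := Link F') id (fun _ _ (hl : Link F _ _) => ⟨h hl.1, h hl.2.1, hl.2.2⟩) _ _ hab

lemma inv_init (T : RootedTree V) : Inv T (initState T) := by
  refine ⟨fun t ht => absurd ht (Set.notMem_empty t), ?_, fun t ht => absurd ht (Set.notMem_empty t)⟩
  intro h
  simp [initState] at h

lemma Inv.step (T : RootedTree V) {s s' : TState V} (h : TStep T s s') (hI : Inv T s) :
    Inv T s' := by
  cases h with
  | pair v v' hv hv' hne hp hdeep hd =>
    have hvr : v ≠ T.root := ne_root_of_depth T (by omega)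
    have hdv := T.depth_parent v hvr
    have hpvr : T.parent v ≠ T.root := ne_root_of_depth T (by omega)
    have hv'r : v' ≠ T.root := by
      intro he; rw [he] at hp; rw [T.parent_root] at hp; exact hpvr hp
    have hpvv : T.parent v ≠ v := parent_ne_self T hvr
    have hpvv' : T.parent v ≠ v' := by rw [hp]; exact parent_ne_self T hv'r
    set tnew : Set V := {v, v', T.parent v} with htnew
    have hpvmem : T.parent v ∈ tnew := by simp [htnew]
    have hpvcol : (fun w => if w = v ∨ w = v' then TColor.green
        else if w = T.parent v then TColor.orange else s.color w) (T.parent v) = TColor.orange := by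
      simp [hpvv, hpvv']
    refine ⟨?_, ?_, ?_⟩
    · intro t ht
      rcases Set.mem_insert_iff.mp ht with rfl | ht
      · exact ⟨tnew, Set.mem_insert _ _, ⟨T.parent v, hpvmem, hpvcol⟩,
          Relation.ReflTransGen.refl⟩
      · obtain ⟨t₀, ht₀, ⟨w, hwt, hw⟩, hpath⟩ := hI.reach t ht
        have hpath' : Relation.ReflTransGen (Link (insert tnew s.trips)) t t₀ :=
          rtg_link_mono (Set.subset_insert _ _) hpath
        by_cases hwv : w = v ∨ w = v'
        · refine ⟨tnew, Set.mem_insert _ _, ⟨T.parent v, hpvmem, hpvcol⟩, hpath'.tail ?_⟩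
          refine ⟨Set.mem_insert_of_mem _ ht₀, Set.mem_insert _ _, ⟨w, hwt, ?_⟩⟩
          rcases hwv with rfl | rfl <;> simp [htnew]
        · refine ⟨t₀, Set.mem_insert_of_mem _ ht₀, ⟨w, hwt, ?_⟩, hpath'⟩
          by_cases hwp : w = T.parent v <;> simp [hwv, hwp, hw, hpvv, hpvv']
    · intro hroot
      have hroot' : s.color T.root = TColor.orange := by
        simpa [Ne.symm hvr, Ne.symm hv'r, Ne.symm hpvr] using hroot
      obtain ⟨t, ht, hrt⟩ := hI.rootOrange hroot'
      exact ⟨t, Set.mem_insert_of_mem _ ht, hrt⟩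
    · intro t ht hroot
      rcases Set.mem_insert_iff.mp ht with rfl | ht
      · rcases hroot with h1 | h1 | h1
        · exact absurd h1.symm hvr
        · exact absurd h1.symm hv'r
        · rw [Set.mem_singleton_iff] at h1; exact absurd h1.symm hpvr
      · exact hI.rootTrip t ht hroot
  | chain v hv hsolo hdeep hd =>
    have hvr : v ≠ T.root := ne_root_of_depth T (by omega)
    have hdv := T.depth_parent v hvr
    have hpvr : T.parent v ≠ T.root := ne_root_of_depth T (by omega)
    have hdpv := T.depth_parent (T.parent v) hpvr
    have hpvv : T.parent v ≠ v := parent_ne_self T hvr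
    have hppv : T.parent (T.parent v) ≠ v := by intro h; rw [h] at hdpv; omega
    have hpppv : T.parent (T.parent v) ≠ T.parent v := parent_ne_self T hpvr
    set tnew : Set V := {v, T.parent v, T.parent (T.parent v)} with htnew
    have hppmem : T.parent (T.parent v) ∈ tnew := by simp [htnew]
    have hppcol : (fun w => if w = v ∨ w = T.parent v then TColor.green
        else if w = T.parent (T.parent v) then TColor.orange else s.color w)
        (T.parent (T.parent v)) = TColor.orange := by
      simp [hppv, hpppv]
    refine ⟨?_, ?_, ?_⟩
    · intro t ht
      rcases Set.mem_insert_iff.mp ht with rfl | ht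
      · exact ⟨tnew, Set.mem_insert _ _, ⟨T.parent (T.parent v), hppmem, hppcol⟩,
          Relation.ReflTransGen.refl⟩
      · obtain ⟨t₀, ht₀, ⟨w, hwt, hw⟩, hpath⟩ := hI.reach t ht
        have hpath' : Relation.ReflTransGen (Link (insert tnew s.trips)) t t₀ :=
          rtg_link_mono (Set.subset_insert _ _) hpath
        by_cases hwv : w = v ∨ w = T.parent v
        · refine ⟨tnew, Set.mem_insert _ _, ⟨T.parent (T.parent v), hppmem, hppcol⟩, hpath'.tail ?_⟩
          refine ⟨Set.mem_insert_of_mem _ ht₀, Set.mem_insert _ _, ⟨w, hwt, ?_⟩⟩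
          rcases hwv with rfl | rfl <;> simp [htnew]
        · refine ⟨t₀, Set.mem_insert_of_mem _ ht₀, ⟨w, hwt, ?_⟩, hpath'⟩
          by_cases hwp : w = T.parent (T.parent v) <;> simp [hwv, hwp, hw, hppv, hpppv]
    · intro hroot
      by_cases h3 : T.root = T.parent (T.parent v)
      · exact ⟨tnew, Set.mem_insert _ _, by rw [h3]; exact hppmem⟩
      · have hroot' : s.color T.root = TColor.orange := by
          simpa [Ne.symm hvr, Ne.symm hpvr, h3] using hroot
        obtain ⟨t, ht, hrt⟩ := hI.rootOrange hroot' 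
        exact ⟨t, Set.mem_insert_of_mem _ ht, hrt⟩
    · intro t ht hroot
      rcases Set.mem_insert_iff.mp ht with rfl | ht
      · rcases hroot with h1 | h1 | h1
        · exact absurd h1.symm hvr
        · exact absurd h1.symm hpvr
        · rw [Set.mem_singleton_iff] at h1
          exact ⟨T.parent v, by simp [htnew], hpvr, by rw [← h1]⟩
      · exact hI.rootTrip t ht hroot

lemma adjacent_share {F : Set (Set V)} {a b : Set V} (ha : a ∈ F) (hb : b ∈ F)
    (hab : (a ∩ b).Nonempty) :
    (SimpleGraph.fromRel
      (fun x y : ↥F => ((x : Set V) ∩ (y : Set V)).Nonempty)).Reachable ⟨a, ha⟩ ⟨b, hb⟩ := by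
  by_cases h : a = b
  · subst h; exact SimpleGraph.Reachable.refl _
  · exact SimpleGraph.Adj.reachable ⟨fun he => h (congrArg Subtype.val he), Or.inl hab⟩

lemma reach_of_rtg {F G : Set (Set V)} (hFG : G ⊆ F) {a b : Set V}
    (h : Relation.ReflTransGen (Link G) a b) (ha : a ∈ F) :
    ∃ hb : b ∈ F, (SimpleGraph.fromRel
      (fun x y : ↥F => ((x : Set V) ∩ (y : Set V)).Nonempty)).Reachable ⟨a, ha⟩ ⟨b, hb⟩ := by
  induction h with
  | refl => exact ⟨ha, SimpleGraph.Reachable.refl _⟩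
  | tail _ hlink ih =>
    obtain ⟨hb, hr⟩ := ih
    obtain ⟨_, hcG, hbc⟩ := hlink
    exact ⟨hFG hcG, hr.trans (adjacent_share hb (hFG hcG) hbc)⟩

lemma inv_exec (T : RootedTree V) {s : TState V}
    (hexec : Relation.ReflTransGen (TStep T) (initState T) s) : Inv T s := by
  induction hexec with
  | refl => exact inv_init T
  | tail _ hstep ih => exact Inv.step T hstep ih

/-- In any execution of the greedy bottom-up triplet-forming procedure on a
rooted tree with degree-1 root, the triplets graph (triplets as vertices, with an edge between
two triplets iff they share at least one tree node) is connected. -/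
theorem greedy_triplets_graph_connected (T : RootedTree V) (hdepth : ∃ v, 2 ≤ T.depth v)
    (s : TState V) (hexec : Relation.ReflTransGen (TStep T) (initState T) s)
    (hterm : Terminal T s) (F : Set (Set V)) (hF : FinalTrips T s F) :
    (SimpleGraph.fromRel (fun a b : ↥F => ((a : Set V) ∩ (b : Set V)).Nonempty)).Connected := by
  have hInv : Inv T s := inv_exec T hexec
  rcases hF with ⟨⟨tr, htr, hroot⟩, rfl⟩ | ⟨hnone, c, g, hcr, hpc, hgc, hpg, rfl⟩
  · obtain ⟨u, hut, hur, hpu⟩ := hInv.rootTrip tr htr hroot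
    have key : ∀ t (ht : t ∈ s.trips),
        (SimpleGraph.fromRel (fun a b : ↥s.trips =>
          ((a : Set V) ∩ (b : Set V)).Nonempty)).Reachable ⟨t, ht⟩ ⟨tr, htr⟩ := by
      intro t ht
      obtain ⟨t₀, ht₀, ⟨w, hwt, hw⟩, hpath⟩ := hInv.reach t ht
      obtain ⟨hb, hr⟩ := reach_of_rtg (le_refl _) hpath ht
      refine hr.trans ?_
      have hu0 : u ∈ t₀ := by
        have hdw := hterm w hw
        have : T.depth w = 0 ∨ T.depth w = 1 := by omega
        rcases this with h0 | h1
        · have hwroot := depth_eq_zero T h0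
          obtain ⟨u', hu't, hu'r, hpu'⟩ := hInv.rootTrip t₀ ht₀ (hwroot ▸ hwt)
          have := child_unique T hur hpu hu'r hpu'
          rw [this]; exact hu't
        · have hwr : w ≠ T.root := by
            intro he; rw [he, T.depth_root] at h1; omega
          have hpw : T.parent w = T.root := by
            have := T.depth_parent w hwr
            exact depth_eq_zero T (by omega)
          have := child_unique T hur hpu hwr hpw
          rw [this]; exact hwt
      exact adjacent_share hb htr ⟨u, hu0, hut⟩
    haveI : Nonempty ↥s.trips := ⟨⟨tr, htr⟩⟩
    refine ⟨?_⟩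
    rintro ⟨a, ha⟩ ⟨b, hb⟩
    exact (key a ha).trans (key b hb).symm
  · set tR : Set V := {T.root, c, g} with htR
    have htRF : tR ∈ insert tR s.trips := Set.mem_insert _ _
    have key : ∀ t (ht : t ∈ s.trips),
        (SimpleGraph.fromRel (fun a b : ↥(insert tR s.trips) =>
          ((a : Set V) ∩ (b : Set V)).Nonempty)).Reachable
          ⟨t, Set.mem_insert_of_mem _ ht⟩ ⟨tR, htRF⟩ := by
      intro t ht
      obtain ⟨t₀, ht₀, ⟨w, hwt, hw⟩, hpath⟩ := hInv.reach t ht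
      obtain ⟨hb, hr⟩ := reach_of_rtg (Set.subset_insert tR s.trips) hpath
        (Set.mem_insert_of_mem _ ht)
      refine hr.trans ?_
      have hc0 : c ∈ t₀ := by
        have hdw := hterm w hw
        have : T.depth w = 0 ∨ T.depth w = 1 := by omega
        rcases this with h0 | h1
        · have hwroot := depth_eq_zero T h0
          exact absurd (hwroot ▸ hwt) (hnone t₀ ht₀)
        · have hwr : w ≠ T.root := by
            intro he; rw [he, T.depth_root] at h1; omega
          have hpw : T.parent w = T.root := by
            have := T.depth_parent w hwr
            exact depth_eq_zero T (by omega)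
          have := child_unique T hcr hpc hwr hpw
          rw [this]; exact hwt
      exact adjacent_share hb htRF ⟨c, hc0, by simp [htR]⟩
    have key2 : ∀ t (ht : t ∈ insert tR s.trips),
        (SimpleGraph.fromRel (fun a b : ↥(insert tR s.trips) =>
          ((a : Set V) ∩ (b : Set V)).Nonempty)).Reachable ⟨t, ht⟩ ⟨tR, htRF⟩ := by
      intro t ht
      rcases Set.mem_insert_iff.mp ht with rfl | ht'
      · exact SimpleGraph.Reachable.refl _
      · exact key t ht'
    haveI : Nonempty ↥(insert tR s.trips) := ⟨⟨tR, htRF⟩⟩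
    refine ⟨?_⟩
    rintro ⟨a, ha⟩ ⟨b, hb⟩
    exact (key2 a ha).trans (key2 b hb).symm

end
end ArtGallery
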